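/- Let N ≥ 1 be an integer and σ ∈ (0,2) with N + σ ≥ 2. Then the constant c(N,σ) := ∫_0^∞ s^{1−σ}/(s² + 1) ds is finite, and for every R > 0 and every y > 0 one has ∫_0^R r^{1−σ} ((r² + y²)^{(N+σ)/2} − r^{N+σ}) / (r² + y²)^{(N+σ)/2} dr ≤ ((N+σ)/2) · c(N,σ) · y^{2−σ}. -/

import Mathlib

open MeasureTheory Set

lemma aux_meas (σ c : ℝ) : Measurable (fun s : ℝ => s ^ (1 - σ) / (s ^ 2 + c)) := by
  apply Measurable.div <;> fun_prop

lemma aux_int {σ : ℝ} (h0 : 0 < σ) (h2 : σ < 2) {c : ℝ} (hc : 0 < c) :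
    IntegrableOn (fun s : ℝ => s ^ (1 - σ) / (s ^ 2 + c)) (Ioi 0) volume := by
  have hm := (aux_meas σ c).aestronglyMeasurable (μ := volume)
  rw [← Ioc_union_Ioi_eq_Ioi (zero_le_one' ℝ)]
  apply IntegrableOn.union
  · -- on Ioc 0 1, dominate by s ^ (1 - σ) / c
    have hb0 : IntegrableOn (fun s : ℝ => s ^ (1 - σ)) (Ioc (0:ℝ) 1) volume := by
      rw [← intervalIntegrable_iff_integrableOn_Ioc_of_le (zero_le_one' ℝ)]
      exact intervalIntegral.intervalIntegrable_rpow' (by linarith)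
    have hb : IntegrableOn (fun s : ℝ => s ^ (1 - σ) / c) (Ioc (0:ℝ) 1) volume :=
      hb0.div_const c
    refine Integrable.mono' hb (hm.restrict) ?_
    filter_upwards [ae_restrict_mem measurableSet_Ioc] with s hs
    have hs0 : 0 < s := hs.1
    have hnum : (0:ℝ) ≤ s ^ (1 - σ) := Real.rpow_nonneg hs0.le _
    rw [Real.norm_eq_abs, abs_of_nonneg (by positivity)]
    apply div_le_div_of_nonneg_left hnum hc
    nlinarith [sq_nonneg s]
  · -- on Ioi 1, dominate by s ^ (-1 - σ)
    have hb : IntegrableOn (fun s : ℝ => s ^ (-1 - σ)) (Ioi (1:ℝ)) volume :=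
      integrableOn_Ioi_rpow_of_lt (by linarith) one_pos
    refine Integrable.mono' hb (hm.restrict) ?_
    filter_upwards [ae_restrict_mem measurableSet_Ioi] with s hs
    have hs0 : (0:ℝ) < s := lt_trans one_pos hs
    have hnum : (0:ℝ) ≤ s ^ (1 - σ) := Real.rpow_nonneg hs0.le _
    rw [Real.norm_eq_abs, abs_of_nonneg (by positivity)]
    have h1 : s ^ (1 - σ) / (s ^ 2 + c) ≤ s ^ (1 - σ) / s ^ 2 := by
      apply div_le_div_of_nonneg_left hnum (by positivity)
      linarith
    refine h1.trans_eq ?_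
    rw [← Real.rpow_natCast s 2, ← Real.rpow_sub hs0]
    congr 1
    push_cast
    ring

/-- Near-field radial bound, case `N + σ ≥ 2`:
`c(N,σ) = ∫_0^∞ s^{1-σ}/(s²+1) ds` is finite and
`∫_0^R r^{1-σ} ((r²+y²)^{(N+σ)/2} - r^{N+σ})/(r²+y²)^{(N+σ)/2} dr
  ≤ ((N+σ)/2) c(N,σ) y^{2-σ}`. -/
theorem stmt5 (N : ℕ) (hN : 1 ≤ N) (σ : ℝ) (hσ : σ ∈ Set.Ioo (0:ℝ) 2)
    (h2 : (2:ℝ) ≤ (N : ℝ) + σ) :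
    IntegrableOn (fun s : ℝ => s ^ (1 - σ) / (s ^ 2 + 1)) (Set.Ioi 0) volume
    ∧ ∀ R > (0:ℝ), ∀ y > (0:ℝ),
        (∫ r in (0:ℝ)..R,
          r ^ (1 - σ) *
            ((r ^ 2 + y ^ 2) ^ (((N : ℝ) + σ) / 2) - r ^ ((N : ℝ) + σ)) /
              (r ^ 2 + y ^ 2) ^ (((N : ℝ) + σ) / 2))
        ≤ (((N : ℝ) + σ) / 2) * (∫ s in Set.Ioi (0:ℝ), s ^ (1 - σ) / (s ^ 2 + 1)) *
            y ^ (2 - σ) := by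
  obtain ⟨hσ0, hσ2⟩ := hσ
  refine ⟨aux_int hσ0 hσ2 one_pos, fun R hR y hy => ?_⟩
  set p : ℝ := ((N : ℝ) + σ) / 2 with hpdef
  have hp1 : (1:ℝ) ≤ p := by rw [hpdef]; linarith
  have hp0 : (0:ℝ) < p := lt_of_lt_of_le one_pos hp1
  have hy2 : (0:ℝ) < y ^ 2 := by positivity
  set C : ℝ := ∫ s in Set.Ioi (0:ℝ), s ^ (1 - σ) / (s ^ 2 + 1) with hCdef
  -- integrability of g r := r^(1-σ)/(r²+y²) on Ioi 0
  have hg : IntegrableOn (fun r : ℝ => r ^ (1 - σ) / (r ^ 2 + y ^ 2)) (Ioi 0) volume :=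
    aux_int hσ0 hσ2 hy2
  -- substitution: ∫_{Ioi 0} r^(1-σ)/(r²+y²) dr = y^(-σ) * C
  have hval : (∫ r in Ioi (0:ℝ), r ^ (1 - σ) / (r ^ 2 + y ^ 2)) = y ^ (-σ) * C := by
    have hsub := integral_comp_mul_left_Ioi
      (fun r : ℝ => r ^ (1 - σ) / (r ^ 2 + y ^ 2)) 0 hy
    rw [mul_zero] at hsub
    have hcong : (∫ x in Ioi (0:ℝ), (y * x) ^ (1 - σ) / ((y * x) ^ 2 + y ^ 2))
        = ∫ x in Ioi (0:ℝ), (y ^ (1 - σ) / y ^ 2) * (x ^ (1 - σ) / (x ^ 2 + 1)) := by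
      apply setIntegral_congr_fun measurableSet_Ioi
      intro x hx
      have hx0 : (0:ℝ) < x := hx
      dsimp only
      rw [Real.mul_rpow hy.le hx0.le]
      have hx1 : (0:ℝ) < x ^ 2 + 1 := by positivity
      field_simp
    rw [hcong, integral_const_mul] at hsub
    have hyσ : (0:ℝ) < y ^ σ := Real.rpow_pos_of_pos hy σ
    have h1σ : y ^ (1 - σ) = y / y ^ σ := by
      rw [Real.rpow_sub hy, Real.rpow_one]
    have hneg : y ^ (-σ) = 1 / y ^ σ := by
      rw [Real.rpow_neg hy.le, one_div]
    have := hsub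
    rw [smul_eq_mul] at this
    have h2' : (∫ r in Ioi (0:ℝ), r ^ (1 - σ) / (r ^ 2 + y ^ 2))
        = y * (y ^ (1 - σ) / y ^ 2 * C) := by
      rw [← hCdef] at this
      field_simp at this ⊢
      linarith [this]
    rw [h2', h1σ, hneg]
    field_simp
  -- pointwise bound on [0, R]
  have hFG : ∀ r ∈ Icc (0:ℝ) R,
      r ^ (1 - σ) * ((r ^ 2 + y ^ 2) ^ p - r ^ ((N : ℝ) + σ)) / (r ^ 2 + y ^ 2) ^ p
      ≤ r ^ (1 - σ) * (p * y ^ 2 * (1 / (r ^ 2 + y ^ 2))) := by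
    intro r hr
    have hr0 : 0 ≤ r := hr.1
    have hA : (0:ℝ) < r ^ 2 + y ^ 2 := by positivity
    have hAp : (0:ℝ) < (r ^ 2 + y ^ 2) ^ p := Real.rpow_pos_of_pos hA p
    -- Bernoulli
    have hs : (-1:ℝ) ≤ r ^ 2 / (r ^ 2 + y ^ 2) - 1 := by
      have : (0:ℝ) ≤ r ^ 2 / (r ^ 2 + y ^ 2) := by positivity
      linarith
    have hber := one_add_mul_self_le_rpow_one_add hs hp1
    have heq1 : (1 : ℝ) + (r ^ 2 / (r ^ 2 + y ^ 2) - 1) = r ^ 2 / (r ^ 2 + y ^ 2) := by ring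
    rw [heq1] at hber
    have heq2 : (r ^ 2 / (r ^ 2 + y ^ 2)) ^ p
        = r ^ ((N : ℝ) + σ) / (r ^ 2 + y ^ 2) ^ p := by
      rw [Real.div_rpow (by positivity) hA.le]
      congr 1
      rw [← Real.rpow_natCast r 2, ← Real.rpow_mul hr0]
      congr 1
      push_cast
      rw [hpdef]
      ring
    rw [heq2] at hber
    have heq3 : r ^ 2 / (r ^ 2 + y ^ 2) - 1 = -(y ^ 2 / (r ^ 2 + y ^ 2)) := by
      field_simp
      ring
    rw [heq3] at hber
    -- hber : 1 + p * -(y²/A) ≤ r^(N+σ)/A^p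
    have hkey : ((r ^ 2 + y ^ 2) ^ p - r ^ ((N : ℝ) + σ)) / (r ^ 2 + y ^ 2) ^ p
        ≤ p * y ^ 2 * (1 / (r ^ 2 + y ^ 2)) := by
      rw [sub_div, div_self hAp.ne']
      have : p * y ^ 2 * (1 / (r ^ 2 + y ^ 2)) = p * (y ^ 2 / (r ^ 2 + y ^ 2)) := by ring
      rw [this]
      linarith
    have hrpow : (0:ℝ) ≤ r ^ (1 - σ) := Real.rpow_nonneg hr0 _
    calc r ^ (1 - σ) * ((r ^ 2 + y ^ 2) ^ p - r ^ ((N : ℝ) + σ)) / (r ^ 2 + y ^ 2) ^ p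
        = r ^ (1 - σ) * (((r ^ 2 + y ^ 2) ^ p - r ^ ((N : ℝ) + σ)) / (r ^ 2 + y ^ 2) ^ p) := by
          ring
      _ ≤ r ^ (1 - σ) * (p * y ^ 2 * (1 / (r ^ 2 + y ^ 2))) :=
          mul_le_mul_of_nonneg_left hkey hrpow
  -- interval integrability
  have hrpowInt : IntervalIntegrable (fun r : ℝ => r ^ (1 - σ)) volume 0 R :=
    intervalIntegral.intervalIntegrable_rpow' (by linarith)
  have hGint : IntervalIntegrable
      (fun r : ℝ => r ^ (1 - σ) * (p * y ^ 2 * (1 / (r ^ 2 + y ^ 2)))) volume 0 R := by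
    apply hrpowInt.mul_continuousOn
    apply Continuous.continuousOn
    apply Continuous.mul continuous_const
    apply Continuous.div continuous_const (by fun_prop)
    intro x; positivity
  have hcontA : Continuous (fun r : ℝ => (r ^ 2 + y ^ 2) ^ p) := by
    apply Continuous.rpow_const (by fun_prop)
    intro x; left; positivity
  have hcontB : Continuous (fun r : ℝ => r ^ ((N : ℝ) + σ)) := by
    apply Continuous.rpow_const continuous_id
    intro x; right; linarith
  have hFint : IntervalIntegrable
      (fun r : ℝ => r ^ (1 - σ) *
        ((r ^ 2 + y ^ 2) ^ p - r ^ ((N : ℝ) + σ)) / (r ^ 2 + y ^ 2) ^ p) volume 0 R := by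
    have : (fun r : ℝ => r ^ (1 - σ) *
        ((r ^ 2 + y ^ 2) ^ p - r ^ ((N : ℝ) + σ)) / (r ^ 2 + y ^ 2) ^ p)
        = fun r : ℝ => r ^ (1 - σ) *
          (((r ^ 2 + y ^ 2) ^ p - r ^ ((N : ℝ) + σ)) / (r ^ 2 + y ^ 2) ^ p) := by
      funext r; ring
    rw [this]
    apply hrpowInt.mul_continuousOn
    apply Continuous.continuousOn
    apply Continuous.div (hcontA.sub hcontB) hcontA
    intro x
    exact (Real.rpow_pos_of_pos (by positivity) p).ne'
  -- chain of inequalities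
  have step1 : (∫ r in (0:ℝ)..R,
      r ^ (1 - σ) * ((r ^ 2 + y ^ 2) ^ p - r ^ ((N : ℝ) + σ)) / (r ^ 2 + y ^ 2) ^ p)
      ≤ ∫ r in (0:ℝ)..R, r ^ (1 - σ) * (p * y ^ 2 * (1 / (r ^ 2 + y ^ 2))) :=
    intervalIntegral.integral_mono_on hR.le hFint hGint hFG
  have step2 : (∫ r in (0:ℝ)..R, r ^ (1 - σ) * (p * y ^ 2 * (1 / (r ^ 2 + y ^ 2))))
      = (p * y ^ 2) * ∫ r in (0:ℝ)..R, r ^ (1 - σ) / (r ^ 2 + y ^ 2) := by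
    rw [← intervalIntegral.integral_const_mul]
    apply intervalIntegral.integral_congr
    intro r _
    ring
  have step3 : (∫ r in (0:ℝ)..R, r ^ (1 - σ) / (r ^ 2 + y ^ 2))
      ≤ ∫ r in Ioi (0:ℝ), r ^ (1 - σ) / (r ^ 2 + y ^ 2) := by
    rw [intervalIntegral.integral_of_le hR.le]
    apply setIntegral_mono_set hg
    · filter_upwards [ae_restrict_mem measurableSet_Ioi] with r hr
      have : (0:ℝ) < r := hr
      positivity
    · exact HasSubset.Subset.eventuallyLE Ioc_subset_Ioi_self
  have hfin : p * C * y ^ (2 - σ) = (p * y ^ 2) * (y ^ (-σ) * C) := by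
    have : y ^ (2 - σ) = y ^ 2 * y ^ (-σ) := by
      rw [show (2:ℝ) - σ = ((2:ℕ):ℝ) + -σ by push_cast; ring, Real.rpow_add hy,
        Real.rpow_natCast]
    rw [this]; ring
  calc (∫ r in (0:ℝ)..R,
      r ^ (1 - σ) * ((r ^ 2 + y ^ 2) ^ p - r ^ ((N : ℝ) + σ)) / (r ^ 2 + y ^ 2) ^ p)
      ≤ ∫ r in (0:ℝ)..R, r ^ (1 - σ) * (p * y ^ 2 * (1 / (r ^ 2 + y ^ 2))) := step1
    _ = (p * y ^ 2) * ∫ r in (0:ℝ)..R, r ^ (1 - σ) / (r ^ 2 + y ^ 2) := step2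
    _ ≤ (p * y ^ 2) * ∫ r in Ioi (0:ℝ), r ^ (1 - σ) / (r ^ 2 + y ^ 2) := by
        apply mul_le_mul_of_nonneg_left step3 (by positivity)
    _ = (p * y ^ 2) * (y ^ (-σ) * C) := by rw [hval]
    _ = p * C * y ^ (2 - σ) := hfin.symm
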